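/- arXiv:2203.15389 — 2 statements merged into one kernel-verified Lean document; each statement's English description precedes it below -/
import Mathlib

section
/- Let ε > 0 and δ₁ ∈ (0, 1/2), and set ε₁ = (ε/2)(1/2 - δ₁). Suppose n, n₂ ∈ ℤ² satisfy |n·n₂| ≥ |n|^ε |n₂|^ε (nonresonance) and let τ ∈ ℝ satisfy ⟨τ + |n|²⟩ ≥ ⟨n·n₂⟩ (largest modulation on the output). Then with n₁ = n + n₂, ⟨n₁⟩^{ε₁} ⟨n₂⟩^{ε₁} ≤ C ⟨τ + |n|²⟩^{1/2 - δ₁} for a constant C depending only on ε and δ₁. -/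
noncomputable def latE (m : Fin 2 → ℤ) : EuclideanSpace ℝ (Fin 2) := WithLp.toLp 2 (fun i => (m i : ℝ))

lemma latE_one_le {n : Fin 2 → ℤ} (hn : n ≠ 0) : 1 ≤ ‖latE n‖ := by
  obtain ⟨i, hi⟩ := Function.ne_iff.mp hn
  have hi' : n i ≠ 0 := by simpa using hi
  have hsq : ‖latE n‖ ^ 2 = ∑ j, (n j : ℝ) ^ 2 := by
    rw [EuclideanSpace.norm_eq, Real.sq_sqrt (by positivity)]
    simp [latE, sq_abs]
  have h1 : (1:ℝ) ≤ (n i : ℝ) ^ 2 := by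
    have h := Int.one_le_abs hi'
    have h' : (1:ℝ) ≤ |(n i : ℝ)| := by exact_mod_cast h
    nlinarith [abs_nonneg ((n i : ℝ)), sq_abs ((n i : ℝ))]
  have hle : (1:ℝ) ≤ ‖latE n‖ ^ 2 := by
    rw [hsq]
    calc (1:ℝ) ≤ (n i : ℝ) ^ 2 := h1
    _ ≤ ∑ j, (n j : ℝ) ^ 2 :=
      Finset.single_le_sum (f := fun j => ((n j : ℝ)) ^ 2)
        (fun j _ => by positivity) (Finset.mem_univ i)
  nlinarith [norm_nonneg (latE n)]

lemma latE_add (n n₂ : Fin 2 → ℤ) : latE (n + n₂) = latE n + latE n₂ := by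
  ext i
  simp [latE, Int.cast_add]

set_option maxHeartbeats 800000 in
/-- Non-resonant Case 1 bound: under nonresonance `|n·n₂| ≥ |n|^ε |n₂|^ε` and when the
output modulation is largest, `⟨n₁⟩^{ε₁} ⟨n₂⟩^{ε₁} ≤ C ⟨τ + |n|²⟩^{1/2 - δ₁}` with
`ε₁ = (ε/2)(1/2 - δ₁)` and `C = C(ε, δ₁)`. -/
theorem stmt_9 (ε δ₁ : ℝ) (hε : 0 < ε) (hδ : 0 < δ₁) (hδ' : δ₁ < 1 / 2) :
    ∃ C : ℝ, 0 < C ∧ ∀ (n n₂ : Fin 2 → ℤ), n ≠ 0 → n₂ ≠ 0 → ∀ τ : ℝ,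
      ‖latE n‖ ^ ε * ‖latE n₂‖ ^ ε ≤ |(inner ℝ (latE n) (latE n₂) : ℝ)| →
      Real.sqrt (1 + (inner ℝ (latE n) (latE n₂) : ℝ) ^ 2)
        ≤ Real.sqrt (1 + (τ + ‖latE n‖ ^ 2) ^ 2) →
      Real.sqrt (1 + ‖latE (n + n₂)‖ ^ 2) ^ ((ε / 2) * (1 / 2 - δ₁))
          * Real.sqrt (1 + ‖latE n₂‖ ^ 2) ^ ((ε / 2) * (1 / 2 - δ₁))
        ≤ C * Real.sqrt (1 + (τ + ‖latE n‖ ^ 2) ^ 2) ^ (1 / 2 - δ₁) := by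
  have hq : (0:ℝ) < 1 /2 - δ₁ := by linarith
  set e1 : ℝ := (ε / 2) * (1 / 2 - δ₁) with he1def
  have he1 : 0 < e1 := by positivity
  refine ⟨(8:ℝ) ^ e1, Real.rpow_pos_of_pos (by norm_num) _, ?_⟩
  intro n n₂ hn hn₂ τ hres hmod
  set A := ‖latE n‖ with hAdef
  set B := ‖latE n₂‖ with hBdef
  set s := ‖latE (n + n₂)‖ with hsdef
  set x := (inner ℝ (latE n) (latE n₂) : ℝ) with hxdef
  have hA1 : 1 ≤ A := latE_one_le hn
  have hB1 : 1 ≤ B := latE_one_le hn₂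
  have hs0 : 0 ≤ s := norm_nonneg _
  have hsAB : s ≤ A + B := by
    rw [hsdef, latE_add]; exact norm_add_le _ _
  have hA2 : 1 ≤ A ^ 2 := by nlinarith
  have hB2 : 1 ≤ B ^ 2 := by nlinarith
  have hs2 : s ^ 2 ≤ (A + B) ^ 2 := by nlinarith
  have hmm : (0:ℝ) ≤ (A ^ 2 - 1) * (B ^ 2 - 1) :=
    mul_nonneg (by linarith) (by linarith)
  clear_value A B s x
  -- sqrt bounds
  have h1 : Real.sqrt (1 + s ^ 2) ≤ 4 * (A * B) := by
    have h := Real.sqrt_le_sqrt (show 1 + s ^ 2 ≤ (4 * (A * B)) ^ 2 by nlinarith [hs2, hA2, hB2, hmm, sq_nonneg (A - B)])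
    rwa [Real.sqrt_sq (by positivity)] at h
  have h2 : Real.sqrt (1 + B ^ 2) ≤ 2 * (A * B) := by
    have h := Real.sqrt_le_sqrt (show 1 + B ^ 2 ≤ (2 * (A * B)) ^ 2 by nlinarith [hA2, hB2, hmm])
    rwa [Real.sqrt_sq (by positivity)] at h
  have hprod : Real.sqrt (1 + s ^ 2) * Real.sqrt (1 + B ^ 2) ≤ 8 * (A * B) ^ 2 := by
    have hnn : (0:ℝ) ≤ Real.sqrt (1 + s ^ 2) := Real.sqrt_nonneg _
    have hnn2 : (0:ℝ) ≤ Real.sqrt (1 + B ^ 2) := Real.sqrt_nonneg _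
    calc Real.sqrt (1 + s ^ 2) * Real.sqrt (1 + B ^ 2)
        ≤ (4 * (A * B)) * (2 * (A * B)) := by
          apply mul_le_mul h1 h2 hnn2 (by positivity)
      _ = 8 * (A * B) ^ 2 := by ring
  -- rpow chain
  have hAB0 : (0:ℝ) ≤ A * B := by positivity
  have step1 : Real.sqrt (1 + s ^ 2) ^ e1 * Real.sqrt (1 + B ^ 2) ^ e1
      ≤ (8 * (A * B) ^ 2) ^ e1 := by
    rw [← Real.mul_rpow (Real.sqrt_nonneg _) (Real.sqrt_nonneg _)]
    exact Real.rpow_le_rpow (by positivity) hprod he1.le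
  have step2 : (8 * (A * B) ^ 2 : ℝ) ^ e1
      = (8:ℝ) ^ e1 * ((A * B) ^ ε) ^ (1 / 2 - δ₁) := by
    rw [Real.mul_rpow (by norm_num) (by positivity)]
    congr 1
    rw [← Real.rpow_natCast (A * B) 2, ← Real.rpow_mul hAB0, ← Real.rpow_mul hAB0]
    congr 1
    push_cast
    ring
  have hresAB : (A * B) ^ ε ≤ |x| := by
    rwa [Real.mul_rpow (by positivity) (by positivity)]
  have habs : |x| ≤ Real.sqrt (1 + x ^ 2) := by
    rw [← Real.sqrt_sq_eq_abs]
    exact Real.sqrt_le_sqrt (by nlinarith)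
  have step3 : ((A * B) ^ ε) ^ (1 / 2 - δ₁)
      ≤ Real.sqrt (1 + (τ + A ^ 2) ^ 2) ^ (1 / 2 - δ₁) := by
    apply Real.rpow_le_rpow (by positivity) _ hq.le
    calc (A * B) ^ ε ≤ |x| := hresAB
      _ ≤ Real.sqrt (1 + x ^ 2) := habs
      _ ≤ Real.sqrt (1 + (τ + A ^ 2) ^ 2) := hmod
  calc Real.sqrt (1 + s ^ 2) ^ e1 * Real.sqrt (1 + B ^ 2) ^ e1
      ≤ (8 * (A * B) ^ 2) ^ e1 := step1
    _ = (8:ℝ) ^ e1 * ((A * B) ^ ε) ^ (1 / 2 - δ₁) := step2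
    _ ≤ (8:ℝ) ^ e1 * Real.sqrt (1 + (τ + A ^ 2) ^ 2) ^ (1 / 2 - δ₁) := by
        apply mul_le_mul_of_nonneg_left step3 (by positivity)
end

section
/- Let u be a smooth solution of i∂ₜu + Δu = |u|² on [0,T) × 𝕋² and set b(t) = Im ∫_{𝕋²} u(t,x) dx. Then b is nonincreasing and satisfies b'(t) ≤ −b(t)² (using the Cauchy–Schwarz inequality ∫|u|² dx ≥ |∫ u dx|² ≥ b(t)² on the unit-volume torus). Consequently, if b(0) < 0, then b(t) ≤ b(0)/(1 + b(0) t) blows up by time T* ≤ −1/b(0), so the solution cannot remain smooth beyond time −1/b(0). -/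
open MeasureTheory

noncomputable def lap2 (f : ℝ × ℝ → ℂ) (x : ℝ × ℝ) : ℂ :=
  deriv (deriv (fun a => f (a, x.2))) x.1 + deriv (deriv (fun b => f (x.1, b))) x.2

def sq2 : Set (ℝ × ℝ) := Set.Icc (0, 0) (1, 1)

lemma sq2_eq : sq2 = Set.Icc (0:ℝ) 1 ×ˢ Set.Icc (0:ℝ) 1 := by
  rw [sq2, Set.Icc_prod_eq]

lemma sq2_compact : IsCompact sq2 := by rw [sq2]; exact isCompact_Icc

lemma vol_sq2 : (volume sq2).toReal = 1 := by
  rw [sq2_eq, Measure.volume_eq_prod, Measure.prod_prod, Real.volume_Icc]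
  norm_num

lemma meas_sq2 : MeasurableSet sq2 := by rw [sq2]; exact measurableSet_Icc

instance : IsFiniteMeasure (volume.restrict sq2) :=
  ⟨by rw [Measure.restrict_apply_univ]; exact sq2_compact.measure_lt_top⟩

lemma aux_ut (u : ℝ → ℝ × ℝ → ℂ) (hsmooth : ContDiff ℝ (⊤ : ℕ∞) (fun p : ℝ × (ℝ × ℝ) => u p.1 p.2)) :
    (∀ s x, HasDerivAt (fun s' => u s' x)
        (fderiv ℝ (fun p : ℝ × (ℝ × ℝ) => u p.1 p.2) (s, x) (1, 0)) s) ∧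
    Continuous (fun p : ℝ × (ℝ × ℝ) =>
        fderiv ℝ (fun q : ℝ × (ℝ × ℝ) => u q.1 q.2) p (1, 0)) := by
  constructor
  · intro s x
    have h1 : HasFDerivAt (fun p : ℝ × (ℝ × ℝ) => u p.1 p.2)
        (fderiv ℝ (fun p : ℝ × (ℝ × ℝ) => u p.1 p.2) (s, x)) (s, x) :=
      (hsmooth.differentiable (by simp) (s, x)).hasFDerivAt
    have h2 : HasDerivAt (fun s' : ℝ => (s', x)) ((1 : ℝ), (0 : ℝ × ℝ)) s :=
      (hasDerivAt_id s).prodMk (hasDerivAt_const s x)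
    exact h1.comp_hasDerivAt s h2
  · exact (ContinuousLinearMap.apply ℝ ℂ ((1:ℝ), (0:ℝ×ℝ))).continuous.comp
      (hsmooth.continuous_fderiv (by simp))


lemma cont_u_s (u : ℝ → ℝ × ℝ → ℂ) (hsmooth : ContDiff ℝ (⊤ : ℕ∞) (fun p : ℝ × (ℝ × ℝ) => u p.1 p.2))
    (s : ℝ) : Continuous (u s) := by
  have : Continuous (fun x : ℝ × ℝ => (fun p : ℝ × (ℝ × ℝ) => u p.1 p.2) (s, x)) :=
    hsmooth.continuous.comp (Continuous.prodMk_right s)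
  simpa using this

lemma aux_hasDeriv (u : ℝ → ℝ × ℝ → ℂ)
    (hsmooth : ContDiff ℝ (⊤ : ℕ∞) (fun p : ℝ × (ℝ × ℝ) => u p.1 p.2)) (t : ℝ) :
    HasDerivAt (fun s => ∫ x in sq2, u s x)
      (∫ x in sq2, fderiv ℝ (fun p : ℝ × (ℝ × ℝ) => u p.1 p.2) (t, x) (1, 0)) t := by
  haveI : IsFiniteMeasure (volume.restrict sq2) :=
    ⟨by rw [Measure.restrict_apply_univ]; exact sq2_compact.measure_lt_top⟩
  obtain ⟨hder, hcont⟩ := aux_ut u hsmooth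
  set ut : ℝ × (ℝ × ℝ) → ℂ :=
    fun p => fderiv ℝ (fun q : ℝ × (ℝ × ℝ) => u q.1 q.2) p (1, 0) with hut
  obtain ⟨C, hC⟩ : ∃ C, ∀ p ∈ Metric.closedBall t 1 ×ˢ sq2, ‖ut p‖ ≤ C :=
    ((isCompact_closedBall t 1).prod sq2_compact).exists_bound_of_continuousOn
      hcont.continuousOn
  have key := hasDerivAt_integral_of_dominated_loc_of_deriv_le (F := fun s x => u s x)
    (F' := fun s x => ut (s, x)) (μ := volume.restrict sq2) (bound := fun _ => C)
    (s := Metric.ball t 1) (Metric.ball_mem_nhds t one_pos)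
    (Filter.Eventually.of_forall fun s => (cont_u_s u hsmooth s).aestronglyMeasurable)
    ((cont_u_s u hsmooth t).continuousOn.integrableOn_compact sq2_compact)
    ((hcont.comp (Continuous.prodMk_right t)).aestronglyMeasurable)
    ?_ (integrable_const C) ?_
  · exact key.2
  · filter_upwards [ae_restrict_mem meas_sq2] with x hx s hs
    exact hC (s, x) ⟨Metric.ball_subset_closedBall hs, hx⟩
  · filter_upwards [ae_restrict_mem meas_sq2] with x _ s _
    exact hder s x

lemma pd1 (f : ℝ × ℝ → ℂ) (hf : ContDiff ℝ (⊤ : ℕ∞) f) (x y : ℝ) :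
    HasDerivAt (fun a => f (a, y)) (fderiv ℝ f (x, y) (1, 0)) x := by
  have h1 : HasFDerivAt f (fderiv ℝ f (x, y)) (x, y) :=
    (hf.differentiable (by simp) (x, y)).hasFDerivAt
  have h2 : HasDerivAt (fun a : ℝ => (a, y)) ((1 : ℝ), (0 : ℝ)) x :=
    (hasDerivAt_id x).prodMk (hasDerivAt_const x y)
  exact h1.comp_hasDerivAt x h2

lemma pd1_smooth (f : ℝ × ℝ → ℂ) (hf : ContDiff ℝ (⊤ : ℕ∞) f) :
    ContDiff ℝ (⊤ : ℕ∞) (fun p : ℝ × ℝ => fderiv ℝ f p ((1 : ℝ), (0 : ℝ))) :=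
  (hf.fderiv_right (by simp)).clm_apply contDiff_const

lemma deriv_fun_eq (f : ℝ × ℝ → ℂ) (hf : ContDiff ℝ (⊤ : ℕ∞) f) (y : ℝ) :
    deriv (fun a => f (a, y)) = fun a => fderiv ℝ f (a, y) ((1 : ℝ), (0 : ℝ)) :=
  funext fun a => (pd1 f hf a y).deriv

lemma int_xx_zero (f : ℝ × ℝ → ℂ) (hf : ContDiff ℝ (⊤ : ℕ∞) f)
    (hper : ∀ x y, f (x + 1, y) = f (x, y)) (y : ℝ) :
    ∫ x in Set.Icc (0 : ℝ) 1, deriv (deriv (fun a => f (a, y))) x = 0 := by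
  set g : ℝ × ℝ → ℂ := fun p => fderiv ℝ f p ((1 : ℝ), (0 : ℝ)) with hgdef
  have hg : ContDiff ℝ (⊤ : ℕ∞) g := pd1_smooth f hf
  have h1 : deriv (fun a => f (a, y)) = fun a => g (a, y) := deriv_fun_eq f hf y
  have h2 : deriv (fun a => g (a, y)) = fun a => fderiv ℝ g (a, y) ((1:ℝ), (0:ℝ)) :=
    deriv_fun_eq g hg y
  rw [h1]
  have hIoc : ∫ x in Set.Icc (0:ℝ) 1, deriv (fun a => g (a, y)) x
      = ∫ x in (0:ℝ)..1, deriv (fun a => g (a, y)) x := by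
    rw [intervalIntegral.integral_of_le (by norm_num : (0:ℝ) ≤ 1),
      integral_Icc_eq_integral_Ioc]
  rw [hIoc, intervalIntegral.integral_deriv_eq_sub]
  · -- g (1, y) = g (0, y) by periodicity
    have hper' : (fun a => f (a + 1, y)) = (fun a => f (a, y)) := funext fun a => hper a y
    have : g (1, y) = g (0, y) := by
      have e0 : ∀ a : ℝ, g (a, y) = deriv (fun a' => f (a', y)) a := by
        intro a; rw [deriv_fun_eq f hf y]
      rw [e0 1, e0 0, show (1:ℝ) = 0 + 1 by norm_num, ← deriv_comp_add_const, hper']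
    rw [this, sub_self]
  · intro x _; exact (pd1 g hg x y).differentiableAt
  · rw [h2]
    exact ((pd1_smooth g hg).continuous.comp
      (continuous_id.prodMk continuous_const)).intervalIntegrable 0 1

lemma lap2_cont (f : ℝ × ℝ → ℂ) (hf : ContDiff ℝ (⊤ : ℕ∞) f) :
    (fun p : ℝ × ℝ => deriv (deriv (fun a => f (a, p.2))) p.1)
      = fun p : ℝ × ℝ => fderiv ℝ (fun q : ℝ × ℝ => fderiv ℝ f q ((1:ℝ),(0:ℝ))) p ((1:ℝ),(0:ℝ)) := by
  funext p
  rw [deriv_fun_eq f hf p.2]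
  exact (pd1 _ (pd1_smooth f hf) p.1 p.2).deriv

lemma flip_eq (f : ℝ × ℝ → ℂ) (x : ℝ) :
    (fun b => f (x, b)) = (fun b => (fun q : ℝ × ℝ => f (q.2, q.1)) (b, x)) := rfl

lemma setIntegral_prod_symm' {α β E : Type*} [MeasurableSpace α] [MeasurableSpace β]
    [NormedAddCommGroup E] [NormedSpace ℝ E] {μ : Measure α} {ν : Measure β}
    [SFinite μ] [SFinite ν] (F : α × β → E) {s : Set α} {t : Set β}
    (hF : IntegrableOn F (s ×ˢ t) (μ.prod ν)) :
    ∫ z in s ×ˢ t, F z ∂μ.prod ν = ∫ y in t, ∫ x in s, F (x, y) ∂μ ∂ν := by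
  simp only [← Measure.prod_restrict s t, IntegrableOn] at hF ⊢
  exact integral_prod_symm F hF

lemma int_lap_zero (f : ℝ × ℝ → ℂ) (hf : ContDiff ℝ (⊤ : ℕ∞) f)
    (hp1 : ∀ x y, f (x + 1, y) = f (x, y)) (hp2 : ∀ x y, f (x, y + 1) = f (x, y)) :
    ∫ x in sq2, lap2 f x = 0 := by
  set f' : ℝ × ℝ → ℂ := fun q => f (q.2, q.1) with hf'def
  have hf' : ContDiff ℝ (⊤ : ℕ∞) f' := hf.comp (contDiff_snd.prodMk contDiff_fst)
  have hp' : ∀ x y, f' (x + 1, y) = f' (x, y) := fun x y => hp2 y x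
  -- continuity of the two second partials
  have c1 : Continuous (fun p : ℝ × ℝ => deriv (deriv (fun a => f (a, p.2))) p.1) := by
    rw [lap2_cont f hf]
    exact (pd1_smooth _ (pd1_smooth f hf)).continuous
  have c2 : Continuous (fun p : ℝ × ℝ => deriv (deriv (fun b => f (p.1, b))) p.2) := by
    have : (fun p : ℝ × ℝ => deriv (deriv (fun b => f (p.1, b))) p.2)
        = (fun p : ℝ × ℝ => deriv (deriv (fun a => f' (a, p.1))) p.2) := by
      funext p; rw [flip_eq f p.1]
    rw [this]
    have := (pd1_smooth _ (pd1_smooth f' hf')).continuous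
    rw [← lap2_cont f' hf'] at this
    exact this.comp (continuous_snd.prodMk continuous_fst)
  have i1 : IntegrableOn (fun p : ℝ × ℝ => deriv (deriv (fun a => f (a, p.2))) p.1) sq2 :=
    c1.continuousOn.integrableOn_compact sq2_compact
  have i2 : IntegrableOn (fun p : ℝ × ℝ => deriv (deriv (fun b => f (p.1, b))) p.2) sq2 :=
    c2.continuousOn.integrableOn_compact sq2_compact
  have hsplit : ∫ x in sq2, lap2 f x
      = (∫ p in sq2, deriv (deriv (fun a => f (a, p.2))) p.1)
        + ∫ p in sq2, deriv (deriv (fun b => f (p.1, b))) p.2 := by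
    unfold lap2
    exact integral_add i1 i2
  rw [hsplit]
  -- first term: Fubini in order ∫ y ∫ x
  have e1 : (∫ p in sq2, deriv (deriv (fun a => f (a, p.2))) p.1) = 0 := by
    rw [sq2_eq] at i1 ⊢
    have key : (∫ p in Set.Icc (0:ℝ) 1 ×ˢ Set.Icc (0:ℝ) 1,
          deriv (deriv (fun a => f (a, p.2))) p.1)
        = ∫ y in Set.Icc (0:ℝ) 1, ∫ x in Set.Icc (0:ℝ) 1,
            deriv (deriv (fun a => f (a, y))) x :=
      setIntegral_prod_symm' _ i1
    rw [key]
    have : ∀ y : ℝ, (∫ x in Set.Icc (0:ℝ) 1, deriv (deriv (fun a => f (a, y))) x) = 0 :=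
      fun y => int_xx_zero f hf hp1 y
    simp [this]
  -- second term: Fubini in order ∫ x ∫ y
  have e2 : (∫ p in sq2, deriv (deriv (fun b => f (p.1, b))) p.2) = 0 := by
    rw [sq2_eq] at i2 ⊢
    have key : (∫ p in Set.Icc (0:ℝ) 1 ×ˢ Set.Icc (0:ℝ) 1,
          deriv (deriv (fun b => f (p.1, b))) p.2)
        = ∫ x in Set.Icc (0:ℝ) 1, ∫ y in Set.Icc (0:ℝ) 1,
            deriv (deriv (fun b => f (x, b))) y :=
      setIntegral_prod _ i2
    rw [key]
    have : ∀ x : ℝ, (∫ y in Set.Icc (0:ℝ) 1, deriv (deriv (fun b => f (x, b))) y) = 0 := by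
      intro x
      have := int_xx_zero f' hf' hp' x
      rw [← flip_eq f x] at this  -- might not rewrite; fallback below
      exact this
    simp [this]
  rw [e1, e2, add_zero]

lemma lap2_continuous (f : ℝ × ℝ → ℂ) (hf : ContDiff ℝ (⊤ : ℕ∞) f) : Continuous (lap2 f) := by
  have hf' : ContDiff ℝ (⊤ : ℕ∞) (fun q : ℝ × ℝ => f (q.2, q.1)) :=
    hf.comp (contDiff_snd.prodMk contDiff_fst)
  have c1 : Continuous (fun p : ℝ × ℝ => deriv (deriv (fun a => f (a, p.2))) p.1) := by
    rw [lap2_cont f hf]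
    exact (pd1_smooth _ (pd1_smooth f hf)).continuous
  have c2 : Continuous (fun p : ℝ × ℝ => deriv (deriv (fun b => f (p.1, b))) p.2) := by
    have : (fun p : ℝ × ℝ => deriv (deriv (fun b => f (p.1, b))) p.2)
        = (fun p : ℝ × ℝ => deriv (deriv (fun a => (fun q : ℝ × ℝ => f (q.2, q.1)) (a, p.1))) p.2) := by
      funext p; rw [flip_eq f p.1]
    rw [this]
    have := (pd1_smooth _ (pd1_smooth _ hf')).continuous
    rw [← lap2_cont _ hf'] at this
    exact this.comp (continuous_snd.prodMk continuous_fst)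
  exact c1.add c2

lemma aux_cs (f : ℝ × ℝ → ℂ) (hf : Continuous f) :
    (∫ x in sq2, f x).im ^ 2 ≤ ∫ x in sq2, ‖f x‖ ^ 2 := by
  set g : ℝ × ℝ → ℝ := fun x => ‖f x‖ with hg
  have hgc : Continuous g := continuous_norm.comp hf
  have hint_g : IntegrableOn g sq2 := hgc.continuousOn.integrableOn_compact sq2_compact
  have hint_g2 : IntegrableOn (fun x => g x ^ 2) sq2 :=
    (hgc.pow 2).continuousOn.integrableOn_compact sq2_compact
  set c : ℝ := ∫ x in sq2, g x with hc
  have hc0 : 0 ≤ c := integral_nonneg fun x => norm_nonneg _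
  have h0 : (0:ℝ) ≤ ∫ x in sq2, (g x - c) ^ 2 := integral_nonneg fun x => sq_nonneg _
  have hexp : ∫ x in sq2, (g x - c) ^ 2 = (∫ x in sq2, g x ^ 2) - c ^ 2 := by
    have hptw : (fun x => (g x - c) ^ 2)
        = fun x => g x ^ 2 - (2 * c) * g x + c ^ 2 := by funext x; ring
    rw [hptw]
    have hsub : IntegrableOn (fun x => g x ^ 2 - 2 * c * g x) sq2 :=
      hint_g2.sub (hint_g.const_mul _)
    rw [integral_add hsub (integrable_const _),
      integral_sub hint_g2 (hint_g.const_mul (2 * c)), integral_const_mul,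
      setIntegral_const, measureReal_def, vol_sq2, ← hc, one_smul]
    ring
  have hcs : c ^ 2 ≤ ∫ x in sq2, g x ^ 2 := by linarith [hexp ▸ h0]
  have him : (∫ x in sq2, f x).im ^ 2 ≤ c ^ 2 := by
    have h1 : |(∫ x in sq2, f x).im| ≤ ‖∫ x in sq2, f x‖ :=
      Complex.abs_im_le_norm _
    have h2 : ‖∫ x in sq2, f x‖ ≤ c := by
      rw [hc, hg]
      simpa using
        norm_integral_le_integral_norm (μ := volume.restrict sq2) f
    calc (∫ x in sq2, f x).im ^ 2 = |(∫ x in sq2, f x).im| ^ 2 := by rw [sq_abs]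
      _ ≤ c ^ 2 := by
          apply pow_le_pow_left₀ (abs_nonneg _) (h1.trans h2)
  linarith

lemma deriv_b (T : ℝ) (u : ℝ → ℝ × ℝ → ℂ)
    (hsmooth : ContDiff ℝ (⊤ : ℕ∞) (fun p : ℝ × (ℝ × ℝ) => u p.1 p.2))
    (hper1 : ∀ t x y, u t (x + 1, y) = u t (x, y))
    (hper2 : ∀ t x y, u t (x, y + 1) = u t (x, y))
    (hPDE : ∀ t ∈ Set.Ico 0 T, ∀ x : ℝ × ℝ,
      Complex.I * deriv (fun s => u s x) t + lap2 (u t) x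
        = ((‖u t x‖ ^ 2 : ℝ) : ℂ))
    (b : ℝ → ℝ) (hb : ∀ t, b t = (∫ x in sq2, u t x).im)
    (t : ℝ) (ht : t ∈ Set.Ico 0 T) :
    HasDerivAt b (-∫ x in sq2, ‖u t x‖ ^ 2) t := by
  haveI : IsFiniteMeasure (volume.restrict sq2) :=
    ⟨by rw [Measure.restrict_apply_univ]; exact sq2_compact.measure_lt_top⟩
  have hbfun : b = fun s => (∫ x in sq2, u s x).im := funext hb
  have hut : ContDiff ℝ (⊤ : ℕ∞) (u t) := by
    have : ContDiff ℝ (⊤ : ℕ∞) (fun x : ℝ × ℝ => (fun p : ℝ × (ℝ × ℝ) => u p.1 p.2) (t, x)) :=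
      hsmooth.comp (contDiff_const.prodMk contDiff_id)
    simpa using this
  have hder := (aux_ut u hsmooth).1
  -- rewrite integrand pointwise using the PDE
  have hptw : (fun x : ℝ × ℝ => fderiv ℝ (fun p : ℝ × (ℝ × ℝ) => u p.1 p.2) (t, x) (1, 0))
      = fun x => Complex.I * lap2 (u t) x
          - Complex.I * ((‖u t x‖ ^ 2 : ℝ) : ℂ) := by
    funext x
    have e1 : deriv (fun s => u s x) t
        = fderiv ℝ (fun p : ℝ × (ℝ × ℝ) => u p.1 p.2) (t, x) (1, 0) := (hder t x).deriv
    have e2 := hPDE t ht x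
    rw [e1] at e2
    have hI : Complex.I * Complex.I = -1 := Complex.I_mul_I
    -- solve for the derivative
    have := congrArg (fun z => -Complex.I * z) e2
    simp only [mul_add, ← mul_assoc, neg_mul, hI, neg_neg, one_mul] at this
    linear_combination this
  have hInt := aux_hasDeriv u hsmooth t
  rw [hptw] at hInt
  have hint_lap : IntegrableOn (lap2 (u t)) sq2 :=
    (lap2_continuous (u t) hut).continuousOn.integrableOn_compact sq2_compact
  have hint_r : IntegrableOn (fun x : ℝ × ℝ => ((‖u t x‖ ^ 2 : ℝ) : ℂ)) sq2 :=
    (Complex.continuous_ofReal.comp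
      ((continuous_norm.comp (cont_u_s u hsmooth t)).pow 2)).continuousOn.integrableOn_compact
      sq2_compact
  have hval : (∫ x in sq2, (Complex.I * lap2 (u t) x
        - Complex.I * ((‖u t x‖ ^ 2 : ℝ) : ℂ)))
      = Complex.I * 0 - Complex.I * ((∫ x in sq2, ‖u t x‖ ^ 2 : ℝ) : ℂ) := by
    have hcoe : (∫ x in sq2, ((‖u t x‖ ^ 2 : ℝ) : ℂ))
        = ((∫ x in sq2, ‖u t x‖ ^ 2 : ℝ) : ℂ) := integral_ofReal
    rw [integral_sub (hint_lap.const_mul _) (hint_r.const_mul _),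
      integral_const_mul, integral_const_mul,
      int_lap_zero (u t) hut (hper1 t) (hper2 t), hcoe]
  rw [hval] at hInt
  have hfinal := (Complex.imCLM.hasFDerivAt).comp_hasDerivAt t hInt
  rw [hbfun]
  convert hfinal using 1
  · rfl
  · rfl
  · rfl
  simp [Complex.ofReal_pow]

/-- Finite-time blowup: for a smooth periodic solution of `i∂ₜu + Δu = |u|²` on
`[0,T) × 𝕋²`, the quantity `b(t) = Im ∫ u dx` is nonincreasing, satisfies
`b' ≤ -b²`, and if `b(0) < 0` then `b(t) ≤ b(0)/(1 + b(0)t)` and `T ≤ -1/b(0)`. -/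
theorem stmt_14 (T : ℝ) (hT : 0 < T)
    (u : ℝ → ℝ × ℝ → ℂ)
    (hsmooth : ContDiff ℝ (⊤ : ℕ∞) (fun p : ℝ × (ℝ × ℝ) => u p.1 p.2))
    (hper1 : ∀ t x y, u t (x + 1, y) = u t (x, y))
    (hper2 : ∀ t x y, u t (x, y + 1) = u t (x, y))
    (hPDE : ∀ t ∈ Set.Ico 0 T, ∀ x : ℝ × ℝ,
      Complex.I * deriv (fun s => u s x) t + lap2 (u t) x
        = ((‖u t x‖ ^ 2 : ℝ) : ℂ))
    (b : ℝ → ℝ) (hb : ∀ t, b t = (∫ x in sq2, u t x).im) :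
    AntitoneOn b (Set.Ico 0 T) ∧
    (∀ t ∈ Set.Ico 0 T, deriv b t ≤ -(b t) ^ 2) ∧
    (b 0 < 0 →
      (∀ t ∈ Set.Ico 0 T, t < -(1 / b 0) → b t ≤ b 0 / (1 + b 0 * t)) ∧
      T ≤ -(1 / b 0)) := by
  -- b is differentiable everywhere
  have hbfun : b = fun s => (∫ x in sq2, u s x).im := funext hb
  have hbd : ∀ t : ℝ, DifferentiableAt ℝ b t := by
    intro t
    have := (Complex.imCLM.hasFDerivAt).comp_hasDerivAt t (aux_hasDeriv u hsmooth t)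
    rw [hbfun]
    exact this.differentiableAt
  -- derivative formula and bounds on [0,T)
  have hderiv : ∀ t ∈ Set.Ico 0 T,
      deriv b t = -∫ x in sq2, ‖u t x‖ ^ 2 :=
    fun t ht => (deriv_b T u hsmooth hper1 hper2 hPDE b hb t ht).deriv
  have hcs : ∀ t : ℝ, (b t) ^ 2 ≤ ∫ x in sq2, ‖u t x‖ ^ 2 := by
    intro t
    rw [hb t]
    exact aux_cs (u t) (cont_u_s u hsmooth t)
  have hd2 : ∀ t ∈ Set.Ico 0 T, deriv b t ≤ -(b t) ^ 2 := by
    intro t ht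
    rw [hderiv t ht]
    linarith [hcs t]
  have hd0 : ∀ t ∈ Set.Ico 0 T, deriv b t ≤ 0 := by
    intro t ht
    have := hd2 t ht
    nlinarith [sq_nonneg (b t)]
  -- antitone
  have hanti : AntitoneOn b (Set.Ico 0 T) := by
    apply antitoneOn_of_deriv_nonpos (convex_Ico 0 T)
    · exact fun t _ => (hbd t).continuousAt.continuousWithinAt
    · intro t ht
      rw [interior_Ico] at ht
      exact ((hbd t).differentiableWithinAt)
    · intro t ht
      rw [interior_Ico] at ht
      exact hd0 t ⟨le_of_lt ht.1, ht.2⟩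
  refine ⟨hanti, hd2, fun hb0 => ?_⟩
  have h0mem : (0:ℝ) ∈ Set.Ico 0 T := ⟨le_refl 0, hT⟩
  have hneg : ∀ t ∈ Set.Ico 0 T, b t < 0 := by
    intro t ht
    have := hanti h0mem ht ht.1
    linarith
  -- h = 1/b - t is monotone on [0,T)
  have hmono : MonotoneOn (fun t => (b t)⁻¹ - t) (Set.Ico 0 T) := by
    apply monotoneOn_of_deriv_nonneg (convex_Ico 0 T)
    · apply ContinuousOn.sub
      · exact ((continuousOn_of_forall_continuousAt
          (fun t _ => (hbd t).continuousAt)).inv₀ (fun t ht => (hneg t ht).ne))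
      · exact continuousOn_id
    · intro t ht
      rw [interior_Ico] at ht
      have ht' : t ∈ Set.Ico 0 T := ⟨le_of_lt ht.1, ht.2⟩
      exact (((hbd t).inv (hneg t ht').ne).sub (differentiableAt_id)).differentiableWithinAt
    · intro t ht
      rw [interior_Ico] at ht
      have ht' : t ∈ Set.Ico 0 T := ⟨le_of_lt ht.1, ht.2⟩
      have hne := (hneg t ht').ne
      have hder : HasDerivAt (fun t => (b t)⁻¹ - t)
          (-(deriv b t) / (b t) ^ 2 - 1) t :=
        (((hbd t).hasDerivAt).inv hne).sub (hasDerivAt_id t)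
      rw [hder.deriv]
      have h1 : deriv b t ≤ -(b t)^2 := hd2 t ht'
      have h2 : (0:ℝ) < (b t)^2 := by positivity
      have h3 : 1 ≤ -deriv b t / b t ^ 2 := by
        rw [le_div_iff₀ h2]; linarith
      linarith
  have hgood : ∀ t ∈ Set.Ico 0 T, t < -(1 / b 0) → b t ≤ b 0 / (1 + b 0 * t) := by
    intro t ht htlt
    have hkey := hmono h0mem ht ht.1
    simp only [sub_zero] at hkey
    have hbt := hneg t ht
    have hpos : 0 < 1 + b 0 * t := by
      have hm : b 0 * (-(1 / b 0)) < b 0 * t := mul_lt_mul_of_neg_left htlt hb0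
      have he : b 0 * (-(1 / b 0)) = -1 := by
        rw [mul_neg, mul_one_div, div_self hb0.ne]
      linarith
    rw [le_div_iff₀ hpos]
    have e1 : b t * (b t)⁻¹ = 1 := mul_inv_cancel₀ hbt.ne
    have e2 : b 0 * (b 0)⁻¹ = 1 := mul_inv_cancel₀ hb0.ne
    have hprod : 0 < b t * b 0 := mul_pos_of_neg_of_neg hbt hb0
    nlinarith [mul_le_mul_of_nonneg_right hkey hprod.le]
  refine ⟨hgood, ?_⟩
  by_contra hcon
  push_neg at hcon
  obtain ⟨t0, ht0def⟩ : ∃ t0 : ℝ, t0 = -(1 / b 0) := ⟨_, rfl⟩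
  rw [← ht0def] at hcon
  have hgood' : ∀ s ∈ Set.Ico 0 T, s < t0 → b s ≤ b 0 / (1 + b 0 * s) := by
    rw [ht0def]; exact hgood
  have ht0pos : 0 < t0 := by
    have : 1 / b 0 < 0 := one_div_neg.mpr hb0
    rw [ht0def]; linarith
  have ht0mem : t0 ∈ Set.Ico 0 T := ⟨ht0pos.le, hcon⟩
  have hM : b t0 < 0 := hneg t0 ht0mem
  obtain ⟨M, hMdef⟩ : ∃ M : ℝ, M = b t0 := ⟨_, rfl⟩
  rw [← hMdef] at hM
  have hMpos : 0 < -M := neg_pos.mpr hM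
  obtain ⟨δ, hδdef⟩ : ∃ δ : ℝ, δ = min t0 (1 / (-M)) / 2 := ⟨_, rfl⟩
  have hδpos : 0 < δ := by
    rw [hδdef]; exact div_pos (lt_min ht0pos (by positivity)) two_pos
  have hδt0 : δ ≤ t0 / 2 := by
    rw [hδdef]; gcongr; exact min_le_left _ _
  have hδM : δ < 1 / (-M) := by
    have h1 : δ ≤ (1 / (-M)) / 2 := by rw [hδdef]; gcongr; exact min_le_right _ _
    have h2 : (0:ℝ) < 1 / (-M) := by positivity
    linarith
  obtain ⟨t, htdef⟩ : ∃ t : ℝ, t = t0 - δ := ⟨_, rfl⟩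
  have htmem : t ∈ Set.Ico 0 T := by
    constructor
    · rw [htdef]; linarith
    · rw [htdef]; linarith [ht0mem.2, hδpos]
  have htlt : t < t0 := by rw [htdef]; linarith
  have hbound := hgood' t htmem htlt
  have hb0t0 : b 0 * t0 = -1 := by
    rw [ht0def, mul_neg, mul_one_div, div_self hb0.ne]
  have he : 1 + b 0 * t = (-b 0) * δ := by
    rw [htdef]; nlinarith [hb0t0]
  have hd : 0 < (-b 0) * δ := mul_pos (neg_pos.mpr hb0) hδpos
  have hlt : b 0 / (1 + b 0 * t) < M := by
    rw [he, div_lt_iff₀ hd]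
    -- b 0 < M * (-b 0 * δ), using δ < 1/(-M)
    have hkey : M * (-b 0) * δ > M * (-b 0) * (1 / (-M)) := by
      apply mul_lt_mul_of_neg_left hδM
      exact mul_neg_of_neg_of_pos hM (neg_pos.mpr hb0)
    have hMne : M ≠ 0 := hM.ne
    have hcalc : M * (-b 0) * (1 / (-M)) = b 0 := by
      field_simp
    nlinarith [hkey, hcalc]
  have hfin : b t < M := lt_of_le_of_lt hbound hlt
  have : M ≤ b t := hMdef ▸ hanti htmem ht0mem htlt.le
  linarith
end
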